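/- (Per-step contraction of AR-RHC under replay attacks, inequality (15)) Consider a closed-loop trajectory of the AR-RHC under a replay attack signal with at most S consecutive attacks, with horizon N ≥ S + 1, and assume every N′-QP encountered attains its infimum for N − S ≤ N′ ≤ N. Then for every k ≥ 0 (with s(−1) := 0), V_{N−s(k)}(x(k+1)) ≤ γ_{N,S}·V_{N−s(k−1)}(x(k)), where γ_{N,S} := (1 − λ_min(P)/φ_∞)·max{ 1 + α_{N−S−1}, (1 + α_{N−1})·∏_{ℓ=N−S}^{N−1}(1 + α_ℓ) }. -/

import Mathlib

open Matrix Finset Filter Topology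

/-- The smallest eigenvalue of a (symmetric) real matrix. -/
noncomputable def lamMin {n : ℕ} (R : Matrix (Fin n) (Fin n) ℝ) : ℝ :=
  if h : R.IsHermitian then ⨅ i, h.eigenvalues i else 0

/-- The largest eigenvalue of a (symmetric) real matrix. -/
noncomputable def lamMax {n : ℕ} (R : Matrix (Fin n) (Fin n) ℝ) : ℝ :=
  if h : R.IsHermitian then ⨆ i, h.eigenvalues i else 0

/-- The quadratic form `xᵀ R x`. -/
noncomputable def qf {p : ℕ} (R : Matrix (Fin p) (Fin p) ℝ) (x : Fin p → ℝ) : ℝ :=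
  x ⬝ᵥ R.mulVec x

/-- λ := 1 − λ_min(Q̄)/λ_max(P̄). -/
noncomputable def lamParam {n : ℕ} (Qb Pb : Matrix (Fin n) (Fin n) ℝ) : ℝ :=
  1 - lamMin Qb / lamMax Pb

/-- φ_N := (λ_max(P̄)·λ_max(P + KᵀQK)/λ_min(P̄))·(1 − λ^{N+1})/(1 − λ). -/
noncomputable def phi {n m : ℕ} (Qb Pb P : Matrix (Fin n) (Fin n) ℝ)
    (Q : Matrix (Fin m) (Fin m) ℝ) (K : Matrix (Fin m) (Fin n) ℝ) (N : ℕ) : ℝ :=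
  (lamMax Pb * lamMax (P + Kᵀ * Q * K) / lamMin Pb) *
    ((1 - lamParam Qb Pb ^ (N + 1)) / (1 - lamParam Qb Pb))

/-- φ_∞ := λ_max(P̄)·λ_max(P + KᵀQK)/(λ_min(P̄)·(1 − λ)). -/
noncomputable def phiInf {n m : ℕ} (Qb Pb P : Matrix (Fin n) (Fin n) ℝ)
    (Q : Matrix (Fin m) (Fin m) ℝ) (K : Matrix (Fin m) (Fin n) ℝ) : ℝ :=
  lamMax Pb * lamMax (P + Kᵀ * Q * K) / (lamMin Pb * (1 - lamParam Qb Pb))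

/-- ψ := λ_max(KᵀQK + ĀᵀPĀ)/λ_min(P). -/
noncomputable def psiC {n m : ℕ} (P Abar : Matrix (Fin n) (Fin n) ℝ)
    (Q : Matrix (Fin m) (Fin m) ℝ) (K : Matrix (Fin m) (Fin n) ℝ) : ℝ :=
  lamMax (Kᵀ * Q * K + Abarᵀ * P * Abar) / lamMin P

/-- χ := 1 − λ_min(P)/φ_∞. -/
noncomputable def chiC {n m : ℕ} (Qb Pb P : Matrix (Fin n) (Fin n) ℝ)
    (Q : Matrix (Fin m) (Fin m) ℝ) (K : Matrix (Fin m) (Fin n) ℝ) : ℝ :=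
  1 - lamMin P / phiInf Qb Pb P Q K

/-- α_N := (λ_max(KᵀQK + ĀᵀPĀ)/λ_min(P))·∏_{κ=0}^{N−1}(1 − λ_min(P)/φ_{κ+1}). -/
noncomputable def alphaC {n m : ℕ} (Qb Pb P Abar : Matrix (Fin n) (Fin n) ℝ)
    (Q : Matrix (Fin m) (Fin m) ℝ) (K : Matrix (Fin m) (Fin n) ℝ) (N : ℕ) : ℝ :=
  psiC P Abar Q K * ∏ κ ∈ Finset.range N, (1 - lamMin P / phi Qb Pb P Q K (κ + 1))

/-- γ_{N,S} := (1 − λ_min(P)/φ_∞)·max{1 + α_{N−S−1}, (1 + α_{N−1})·∏_{ℓ=N−S}^{N−1}(1 + α_ℓ)}. -/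
noncomputable def gammaNS {n m : ℕ} (Qb Pb P Abar : Matrix (Fin n) (Fin n) ℝ)
    (Q : Matrix (Fin m) (Fin m) ℝ) (K : Matrix (Fin m) (Fin n) ℝ) (N S : ℕ) : ℝ :=
  (1 - lamMin P / phiInf Qb Pb P Q K) *
    max (1 + alphaC Qb Pb P Abar Q K (N - S - 1))
      ((1 + alphaC Qb Pb P Abar Q K (N - 1)) *
        ∏ ℓ ∈ Finset.Ico (N - S) N, (1 + alphaC Qb Pb P Abar Q K ℓ))

/-- The trajectory of `x(τ+1) = A x(τ) + B u(τ)` from `x0` under the control sequence `u`. -/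
def traj {n m : ℕ} (A : Matrix (Fin n) (Fin n) ℝ) (B : Matrix (Fin n) (Fin m) ℝ)
    (x0 : Fin n → ℝ) (u : ℕ → Fin m → ℝ) : ℕ → Fin n → ℝ
  | 0 => x0
  | τ + 1 => A *ᵥ traj A B x0 u τ + B *ᵥ u τ

/-- Feasibility of a control sequence `u(0),…,u(N−1)` for the `N`-QP at `x`. -/
def Feasible {n m : ℕ} (A : Matrix (Fin n) (Fin n) ℝ) (B : Matrix (Fin n) (Fin m) ℝ)
    (X0 : Set (Fin n → ℝ)) (U : Set (Fin m → ℝ)) (N : ℕ) (x : Fin n → ℝ)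
    (u : ℕ → Fin m → ℝ) : Prop :=
  (∀ τ < N, u τ ∈ U) ∧ (∀ τ < N, traj A B x u (τ + 1) ∈ X0)

/-- The cost `Σ_{τ=0}^{N−1}(x(τ)ᵀPx(τ) + u(τ)ᵀQu(τ)) + x(N)ᵀPx(N)` of the `N`-QP. -/
noncomputable def cost {n m : ℕ} (A : Matrix (Fin n) (Fin n) ℝ) (B : Matrix (Fin n) (Fin m) ℝ)
    (P : Matrix (Fin n) (Fin n) ℝ) (Q : Matrix (Fin m) (Fin m) ℝ) (N : ℕ)
    (x : Fin n → ℝ) (u : ℕ → Fin m → ℝ) : ℝ :=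
  (∑ τ ∈ Finset.range N, (qf P (traj A B x u τ) + qf Q (u τ))) + qf P (traj A B x u N)

/-- `V_N(x)`: the optimal value of the `N`-QP at `x`. -/
noncomputable def Vopt {n m : ℕ} (A : Matrix (Fin n) (Fin n) ℝ) (B : Matrix (Fin n) (Fin m) ℝ)
    (P : Matrix (Fin n) (Fin n) ℝ) (Q : Matrix (Fin m) (Fin m) ℝ)
    (X0 : Set (Fin n → ℝ)) (U : Set (Fin m → ℝ)) (N : ℕ) (x : Fin n → ℝ) : ℝ :=
  sInf (cost A B P Q N x '' {u | Feasible A B X0 U N x u})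


section MatrixFacts
variable {n m : ℕ}

lemma nsq_nonneg (x : Fin n → ℝ) : (0:ℝ) ≤ x ⬝ᵥ x :=
  Finset.sum_nonneg fun i _ => mul_self_nonneg _

lemma lamMin_le_eig {R : Matrix (Fin n) (Fin n) ℝ} (h : R.IsHermitian) (i : Fin n) :
    lamMin R ≤ h.eigenvalues i := by
  rw [lamMin, dif_pos h]
  exact ciInf_le (Set.Finite.bddBelow (Set.finite_range _)) i

lemma eig_le_lamMax {R : Matrix (Fin n) (Fin n) ℝ} (h : R.IsHermitian) (i : Fin n) :
    h.eigenvalues i ≤ lamMax R := by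
  rw [lamMax, dif_pos h]
  exact le_ciSup (Set.Finite.bddAbove (Set.finite_range _)) i

lemma exists_lamMin [NeZero n] {R : Matrix (Fin n) (Fin n) ℝ} (h : R.IsHermitian) :
    ∃ i, lamMin R = h.eigenvalues i := by
  obtain ⟨i, hi⟩ := Finite.exists_min h.eigenvalues
  exact ⟨i, le_antisymm (lamMin_le_eig h i) (by rw [lamMin, dif_pos h]; exact le_ciInf hi)⟩

lemma exists_lamMax [NeZero n] {R : Matrix (Fin n) (Fin n) ℝ} (h : R.IsHermitian) :
    ∃ i, lamMax R = h.eigenvalues i := by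
  obtain ⟨i, hi⟩ := Finite.exists_max h.eigenvalues
  exact ⟨i, le_antisymm (by rw [lamMax, dif_pos h]; exact ciSup_le hi) (eig_le_lamMax h i)⟩

lemma star_mulVec_dot (U : Matrix (Fin n) (Fin n) ℝ) (hU : U ∈ Matrix.unitaryGroup (Fin n) ℝ)
    (x : Fin n → ℝ) : (star U *ᵥ x) ⬝ᵥ (star U *ᵥ x) = x ⬝ᵥ x := by
  rw [dotProduct_mulVec, vecMul_mulVec]
  have h1 : (star U)ᵀ = U := by
    rw [star_eq_conjTranspose, conjTranspose_eq_transpose_of_trivial, transpose_transpose]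
  rw [h1, mem_unitaryGroup_iff.mp hU, vecMul_one]

lemma qf_eq_sum {R : Matrix (Fin n) (Fin n) ℝ} (h : R.IsHermitian) (x : Fin n → ℝ) :
    qf R x = ∑ i, h.eigenvalues i *
      ((star (h.eigenvectorUnitary : Matrix (Fin n) (Fin n) ℝ) *ᵥ x) i)^2 := by
  set U : Matrix (Fin n) (Fin n) ℝ := (h.eigenvectorUnitary : Matrix (Fin n) (Fin n) ℝ) with hU
  have hdec := h.spectral_theorem
  rw [qf]
  conv_lhs => rw [hdec]
  rw [Unitary.conjStarAlgAut_apply]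
  rw [← mulVec_mulVec, ← mulVec_mulVec, dotProduct_mulVec x]
  have hvm : x ᵥ* U = star U *ᵥ x := by
    rw [star_eq_conjTranspose, conjTranspose_eq_transpose_of_trivial, ← vecMul_transpose,
      transpose_transpose]
  rw [hvm, show (RCLike.ofReal ∘ h.eigenvalues : Fin n → ℝ) = h.eigenvalues from rfl]
  rw [dotProduct, Finset.sum_congr rfl]
  intro i _
  rw [mulVec_diagonal]
  ring

lemma nsq_eq_sum {R : Matrix (Fin n) (Fin n) ℝ} (h : R.IsHermitian) (x : Fin n → ℝ) :
    x ⬝ᵥ x = ∑ i, ((star (h.eigenvectorUnitary : Matrix (Fin n) (Fin n) ℝ) *ᵥ x) i)^2 := by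
  rw [← star_mulVec_dot _ h.eigenvectorUnitary.2 x, dotProduct]
  exact Finset.sum_congr rfl fun i _ => (sq _).symm

lemma qf_le_lamMax {R : Matrix (Fin n) (Fin n) ℝ} (h : R.IsHermitian) (x : Fin n → ℝ) :
    qf R x ≤ lamMax R * (x ⬝ᵥ x) := by
  rw [qf_eq_sum h, nsq_eq_sum h x, Finset.mul_sum]
  exact Finset.sum_le_sum fun i _ =>
    mul_le_mul_of_nonneg_right (eig_le_lamMax h i) (sq_nonneg _)

lemma lamMin_le_qf {R : Matrix (Fin n) (Fin n) ℝ} (h : R.IsHermitian) (x : Fin n → ℝ) :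
    lamMin R * (x ⬝ᵥ x) ≤ qf R x := by
  rw [qf_eq_sum h, nsq_eq_sum h x, Finset.mul_sum]
  exact Finset.sum_le_sum fun i _ =>
    mul_le_mul_of_nonneg_right (lamMin_le_eig h i) (sq_nonneg _)

lemma qf_nonneg {p : ℕ} {R : Matrix (Fin p) (Fin p) ℝ} (h : R.PosSemidef) (x : Fin p → ℝ) :
    0 ≤ qf R x := by
  have := h.dotProduct_mulVec_nonneg x
  rw [star_trivial] at this
  exact this

lemma qf_pos {p : ℕ} {R : Matrix (Fin p) (Fin p) ℝ} (h : R.PosDef) {x : Fin p → ℝ}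
    (hx : x ≠ 0) : 0 < qf R x := by
  have := h.dotProduct_mulVec_pos hx
  rw [star_trivial] at this
  exact this

lemma lamMin_pos [NeZero n] {R : Matrix (Fin n) (Fin n) ℝ} (h : R.PosDef) : 0 < lamMin R := by
  obtain ⟨i, hi⟩ := exists_lamMin h.1
  rw [hi]; exact h.eigenvalues_pos i

lemma lamMin_le_lamMax [NeZero n] {R : Matrix (Fin n) (Fin n) ℝ} (h : R.IsHermitian) :
    lamMin R ≤ lamMax R :=
  le_trans (lamMin_le_eig h (Classical.arbitrary _)) (eig_le_lamMax h _)

lemma lamMax_pos [NeZero n] {R : Matrix (Fin n) (Fin n) ℝ} (h : R.PosDef) : 0 < lamMax R :=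
  lt_of_lt_of_le (lamMin_pos h) (lamMin_le_lamMax h.1)

lemma lamMin_nonneg [NeZero n] {R : Matrix (Fin n) (Fin n) ℝ} (h : R.PosSemidef) :
    0 ≤ lamMin R := by
  obtain ⟨i, hi⟩ := exists_lamMin h.1
  rw [hi]; exact h.eigenvalues_nonneg i

lemma qf_add (R1 R2 : Matrix (Fin n) (Fin n) ℝ) (x : Fin n → ℝ) :
    qf (R1 + R2) x = qf R1 x + qf R2 x := by
  rw [qf, qf, qf, add_mulVec, dotProduct_add]

lemma qf_sub (R1 R2 : Matrix (Fin n) (Fin n) ℝ) (x : Fin n → ℝ) :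
    qf (R1 - R2) x = qf R1 x - qf R2 x := by
  rw [qf, qf, qf, sub_mulVec, dotProduct_sub]

lemma qf_transform {p : ℕ} (R : Matrix (Fin p) (Fin p) ℝ) (M : Matrix (Fin p) (Fin n) ℝ)
    (x : Fin n → ℝ) : qf (Mᵀ * R * M) x = qf R (M *ᵥ x) := by
  rw [qf, qf, ← mulVec_mulVec, ← mulVec_mulVec, dotProduct_mulVec x, vecMul_transpose]

lemma psd_transform {p : ℕ} {R : Matrix (Fin p) (Fin p) ℝ} (h : R.PosSemidef)
    (M : Matrix (Fin p) (Fin n) ℝ) : (Mᵀ * R * M).PosSemidef := by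
  have := h.conjTranspose_mul_mul_same M
  rwa [conjTranspose_eq_transpose_of_trivial] at this

lemma herm_transform {p : ℕ} {R : Matrix (Fin p) (Fin p) ℝ} (h : R.IsHermitian)
    (M : Matrix (Fin p) (Fin n) ℝ) : (Mᵀ * R * M).IsHermitian := by
  have : (Mᴴ * R * M).IsHermitian := isHermitian_conjTranspose_mul_mul M h
  rwa [conjTranspose_eq_transpose_of_trivial] at this

end MatrixFacts

section Consts
variable {n m : ℕ} [NeZero n]
variable {Qb Pb P Abar : Matrix (Fin n) (Fin n) ℝ} {Q : Matrix (Fin m) (Fin m) ℝ}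
  {K : Matrix (Fin m) (Fin n) ℝ}

/-- a convenient unit vector -/
noncomputable def e1 (n : ℕ) [NeZero n] : Fin n → ℝ :=
  Pi.single ⟨0, Nat.pos_of_ne_zero (NeZero.ne n)⟩ 1

lemma e1_nsq : (e1 n) ⬝ᵥ (e1 n) = 1 := by
  rw [e1, dotProduct_single, Pi.single_eq_same, one_mul]

lemma lamMin_le_lamMax_of_qf_le {R1 R2 : Matrix (Fin n) (Fin n) ℝ}
    (h1 : R1.IsHermitian) (h2 : R2.IsHermitian)
    (h : ∀ x : Fin n → ℝ, qf R1 x ≤ qf R2 x) : lamMin R1 ≤ lamMax R2 := by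
  have a := lamMin_le_qf h1 (e1 n)
  have b := qf_le_lamMax h2 (e1 n)
  rw [e1_nsq, mul_one] at a b
  exact a.trans ((h _).trans b)

lemma hQb_eq (hL : Abarᵀ * Pb * Abar - Pb = -Qb) : Qb = Pb - Abarᵀ * Pb * Abar := by
  have := congrArg Neg.neg hL
  rw [neg_neg] at this
  rw [← this]; abel

lemma qf_Abar (hPb : Pb.PosDef) (hL : Abarᵀ * Pb * Abar - Pb = -Qb) (x : Fin n → ℝ) :
    qf Pb (Abar *ᵥ x) = qf Pb x - qf Qb x := by
  rw [hQb_eq hL, qf_sub, qf_transform]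
  ring

lemma qf_Qb_le (hPb : Pb.PosDef) (hL : Abarᵀ * Pb * Abar - Pb = -Qb) (x : Fin n → ℝ) :
    qf Qb x ≤ qf Pb x := by
  have h := qf_Abar (Qb := Qb) hPb hL x
  have h2 : 0 ≤ qf Pb (Abar *ᵥ x) := qf_nonneg hPb.posSemidef _
  linarith

lemma lam_nonneg (hQb : Qb.PosDef) (hPb : Pb.PosDef) (hL : Abarᵀ * Pb * Abar - Pb = -Qb) :
    0 ≤ lamParam Qb Pb := by
  have h := lamMin_le_lamMax_of_qf_le hQb.1 hPb.1 (qf_Qb_le hPb hL)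
  rw [lamParam, sub_nonneg]
  exact div_le_one_of_le₀ h (lamMax_pos hPb).le

lemma lam_lt_one (hQb : Qb.PosDef) (hPb : Pb.PosDef) : lamParam Qb Pb < 1 := by
  rw [lamParam, sub_lt_self_iff]
  exact div_pos (lamMin_pos hQb) (lamMax_pos hPb)

lemma PKQK_posDef (hP : P.PosDef) (hQ : Q.PosDef) : (P + Kᵀ * Q * K).PosDef :=
  hP.add_posSemidef (psd_transform hQ.posSemidef K)

lemma C_pos (hPb : Pb.PosDef) (hP : P.PosDef) (hQ : Q.PosDef) :
    0 < lamMax Pb * lamMax (P + Kᵀ * Q * K) / lamMin Pb :=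
  div_pos (mul_pos (lamMax_pos hPb) (lamMax_pos (PKQK_posDef hP hQ))) (lamMin_pos hPb)

lemma lamMinP_le_C (hPb : Pb.PosDef) (hP : P.PosDef) (hQ : Q.PosDef) :
    lamMin P ≤ lamMax Pb * lamMax (P + Kᵀ * Q * K) / lamMin Pb := by
  have h1 : lamMin P ≤ lamMax (P + Kᵀ * Q * K) := by
    refine lamMin_le_lamMax_of_qf_le hP.1 (PKQK_posDef hP hQ).1 (fun x => ?_)
    rw [qf_add]
    have := qf_nonneg (psd_transform hQ.posSemidef K) x
    linarith
  have h2 : (1:ℝ) ≤ lamMax Pb / lamMin Pb := by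
    rw [le_div_iff₀ (lamMin_pos hPb), one_mul]
    exact lamMin_le_lamMax hPb.1
  calc lamMin P ≤ lamMax (P + Kᵀ * Q * K) := h1
    _ = 1 * lamMax (P + Kᵀ * Q * K) := (one_mul _).symm
    _ ≤ (lamMax Pb / lamMin Pb) * lamMax (P + Kᵀ * Q * K) := by
        exact mul_le_mul_of_nonneg_right h2 (lamMax_pos (PKQK_posDef hP hQ)).le
    _ = lamMax Pb * lamMax (P + Kᵀ * Q * K) / lamMin Pb := by ring

lemma C_le_phi (hQb : Qb.PosDef) (hPb : Pb.PosDef) (hL : Abarᵀ * Pb * Abar - Pb = -Qb)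
    (hP : P.PosDef) (hQ : Q.PosDef) (N : ℕ) :
    lamMax Pb * lamMax (P + Kᵀ * Q * K) / lamMin Pb ≤ phi Qb Pb P Q K N := by
  rw [phi]
  have h0 := lam_nonneg hQb hPb hL
  have h1 := lam_lt_one hQb hPb
  have hfac : (1:ℝ) ≤ (1 - lamParam Qb Pb ^ (N + 1)) / (1 - lamParam Qb Pb) := by
    rw [le_div_iff₀ (by linarith)]
    have : lamParam Qb Pb ^ (N + 1) ≤ lamParam Qb Pb ^ 1 :=
      pow_le_pow_of_le_one h0 h1.le (by omega)
    rw [pow_one] at this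
    linarith
  nlinarith [C_pos (K := K) hPb hP hQ]

lemma phi_pos (hQb : Qb.PosDef) (hPb : Pb.PosDef) (hL : Abarᵀ * Pb * Abar - Pb = -Qb)
    (hP : P.PosDef) (hQ : Q.PosDef) (N : ℕ) : 0 < phi Qb Pb P Q K N :=
  lt_of_lt_of_le (C_pos hPb hP hQ) (C_le_phi hQb hPb hL hP hQ N)

lemma lamMinP_le_phi (hQb : Qb.PosDef) (hPb : Pb.PosDef) (hL : Abarᵀ * Pb * Abar - Pb = -Qb)
    (hP : P.PosDef) (hQ : Q.PosDef) (N : ℕ) : lamMin P ≤ phi Qb Pb P Q K N :=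
  le_trans (lamMinP_le_C hPb hP hQ) (C_le_phi hQb hPb hL hP hQ N)

lemma phiInf_eq : phiInf Qb Pb P Q K
    = (lamMax Pb * lamMax (P + Kᵀ * Q * K) / lamMin Pb) / (1 - lamParam Qb Pb) := by
  rw [phiInf, div_div]

lemma phi_le_phiInf (hQb : Qb.PosDef) (hPb : Pb.PosDef) (hL : Abarᵀ * Pb * Abar - Pb = -Qb)
    (hP : P.PosDef) (hQ : Q.PosDef) (N : ℕ) :
    phi Qb Pb P Q K N ≤ phiInf Qb Pb P Q K := by
  rw [phi, phiInf_eq]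
  have h0 := lam_nonneg hQb hPb hL
  have h1 := lam_lt_one hQb hPb
  have hC := C_pos (K := K) hPb hP hQ
  have hfrac : (1 - lamParam Qb Pb ^ (N + 1)) / (1 - lamParam Qb Pb)
      ≤ 1 / (1 - lamParam Qb Pb) := by
    have : 0 ≤ lamParam Qb Pb ^ (N+1) := pow_nonneg h0 _
    gcongr
    · linarith
  calc lamMax Pb * lamMax (P + Kᵀ * Q * K) / lamMin Pb *
        ((1 - lamParam Qb Pb ^ (N + 1)) / (1 - lamParam Qb Pb))
      ≤ lamMax Pb * lamMax (P + Kᵀ * Q * K) / lamMin Pb * (1 / (1 - lamParam Qb Pb)) :=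
        mul_le_mul_of_nonneg_left hfrac hC.le
    _ = lamMax Pb * lamMax (P + Kᵀ * Q * K) / lamMin Pb / (1 - lamParam Qb Pb) := by
        rw [mul_one_div]

lemma phiInf_pos (hQb : Qb.PosDef) (hPb : Pb.PosDef) (hL : Abarᵀ * Pb * Abar - Pb = -Qb)
    (hP : P.PosDef) (hQ : Q.PosDef) : 0 < phiInf Qb Pb P Q K :=
  lt_of_lt_of_le (phi_pos hQb hPb hL hP hQ 0) (phi_le_phiInf hQb hPb hL hP hQ 0)

lemma lamMinP_le_phiInf (hQb : Qb.PosDef) (hPb : Pb.PosDef) (hL : Abarᵀ * Pb * Abar - Pb = -Qb)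
    (hP : P.PosDef) (hQ : Q.PosDef) : lamMin P ≤ phiInf Qb Pb P Q K :=
  le_trans (lamMinP_le_phi hQb hPb hL hP hQ 0) (phi_le_phiInf hQb hPb hL hP hQ 0)

lemma factor_mem (hQb : Qb.PosDef) (hPb : Pb.PosDef) (hL : Abarᵀ * Pb * Abar - Pb = -Qb)
    (hP : P.PosDef) (hQ : Q.PosDef) (N : ℕ) :
    0 ≤ 1 - lamMin P / phi Qb Pb P Q K N ∧ 1 - lamMin P / phi Qb Pb P Q K N ≤ 1 := by
  constructor
  · rw [sub_nonneg]
    exact div_le_one_of_le₀ (lamMinP_le_phi hQb hPb hL hP hQ N) (phi_pos hQb hPb hL hP hQ N).le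
  · have : 0 ≤ lamMin P / phi Qb Pb P Q K N :=
      div_nonneg (lamMin_pos hP).le (phi_pos hQb hPb hL hP hQ N).le
    linarith

lemma chi_nonneg (hQb : Qb.PosDef) (hPb : Pb.PosDef) (hL : Abarᵀ * Pb * Abar - Pb = -Qb)
    (hP : P.PosDef) (hQ : Q.PosDef) : 0 ≤ 1 - lamMin P / phiInf Qb Pb P Q K := by
  rw [sub_nonneg]
  exact div_le_one_of_le₀ (lamMinP_le_phiInf hQb hPb hL hP hQ) (phiInf_pos hQb hPb hL hP hQ).le

lemma factor_le_chi (hQb : Qb.PosDef) (hPb : Pb.PosDef) (hL : Abarᵀ * Pb * Abar - Pb = -Qb)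
    (hP : P.PosDef) (hQ : Q.PosDef) (N : ℕ) :
    1 - lamMin P / phi Qb Pb P Q K N ≤ 1 - lamMin P / phiInf Qb Pb P Q K := by
  gcongr
  · exact lamMin_pos hP |>.le
  · exact phi_pos hQb hPb hL hP hQ N
  · exact phi_le_phiInf hQb hPb hL hP hQ N

lemma rho_nonneg (hQb : Qb.PosDef) (hPb : Pb.PosDef) (hL : Abarᵀ * Pb * Abar - Pb = -Qb)
    (hP : P.PosDef) (hQ : Q.PosDef) (N : ℕ) :
    0 ≤ ∏ κ ∈ Finset.range N, (1 - lamMin P / phi Qb Pb P Q K (κ + 1)) :=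
  Finset.prod_nonneg fun κ _ => (factor_mem hQb hPb hL hP hQ (κ+1)).1

lemma rho_le_one (hQb : Qb.PosDef) (hPb : Pb.PosDef) (hL : Abarᵀ * Pb * Abar - Pb = -Qb)
    (hP : P.PosDef) (hQ : Q.PosDef) (N : ℕ) :
    ∏ κ ∈ Finset.range N, (1 - lamMin P / phi Qb Pb P Q K (κ + 1)) ≤ 1 :=
  Finset.prod_le_one (fun κ _ => (factor_mem hQb hPb hL hP hQ (κ+1)).1)
    (fun κ _ => (factor_mem hQb hPb hL hP hQ (κ+1)).2)

lemma rho_antitone (hQb : Qb.PosDef) (hPb : Pb.PosDef) (hL : Abarᵀ * Pb * Abar - Pb = -Qb)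
    (hP : P.PosDef) (hQ : Q.PosDef) {N1 N2 : ℕ} (h : N1 ≤ N2) :
    ∏ κ ∈ Finset.range N2, (1 - lamMin P / phi Qb Pb P Q K (κ + 1))
      ≤ ∏ κ ∈ Finset.range N1, (1 - lamMin P / phi Qb Pb P Q K (κ + 1)) := by
  rw [← Finset.prod_range_mul_prod_Ico _ h]
  have h2 : ∏ κ ∈ Finset.Ico N1 N2, (1 - lamMin P / phi Qb Pb P Q K (κ + 1)) ≤ 1 :=
    Finset.prod_le_one (fun κ _ => (factor_mem hQb hPb hL hP hQ (κ+1)).1)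
      (fun κ _ => (factor_mem hQb hPb hL hP hQ (κ+1)).2)
  have h1 := rho_nonneg (K := K) hQb hPb hL hP hQ N1
  nlinarith

lemma psi_nonneg (hP : P.PosDef) (hQ : Q.PosDef) : 0 ≤ psiC P Abar Q K := by
  apply div_nonneg _ (lamMin_pos hP).le
  have hpsd : (Kᵀ * Q * K + Abarᵀ * P * Abar).PosSemidef :=
    (psd_transform hQ.posSemidef K).add (psd_transform hP.posSemidef Abar)
  obtain ⟨i, hi⟩ := exists_lamMax hpsd.1
  rw [hi]; exact hpsd.eigenvalues_nonneg i

lemma alpha_nonneg (hQb : Qb.PosDef) (hPb : Pb.PosDef) (hL : Abarᵀ * Pb * Abar - Pb = -Qb)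
    (hP : P.PosDef) (hQ : Q.PosDef) (N : ℕ) : 0 ≤ alphaC Qb Pb P Abar Q K N :=
  mul_nonneg (psi_nonneg hP hQ) (rho_nonneg hQb hPb hL hP hQ N)

lemma alpha_antitone (hQb : Qb.PosDef) (hPb : Pb.PosDef) (hL : Abarᵀ * Pb * Abar - Pb = -Qb)
    (hP : P.PosDef) (hQ : Q.PosDef) {N1 N2 : ℕ} (h : N1 ≤ N2) :
    alphaC Qb Pb P Abar Q K N2 ≤ alphaC Qb Pb P Abar Q K N1 :=
  mul_le_mul_of_nonneg_left (rho_antitone hQb hPb hL hP hQ h) (psi_nonneg hP hQ)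

end Consts

section Control
variable {n m : ℕ}
variable {A : Matrix (Fin n) (Fin n) ℝ} {B : Matrix (Fin n) (Fin m) ℝ}
  {P : Matrix (Fin n) (Fin n) ℝ} {Q : Matrix (Fin m) (Fin m) ℝ}
  {X0 : Set (Fin n → ℝ)} {U : Set (Fin m → ℝ)}

lemma traj_congr {x : Fin n → ℝ} {u v : ℕ → Fin m → ℝ} :
    ∀ {τ : ℕ}, (∀ σ < τ, u σ = v σ) → traj A B x u τ = traj A B x v τ
  | 0, _ => rfl
  | τ+1, h => by
      show A *ᵥ traj A B x u τ + B *ᵥ u τ = A *ᵥ traj A B x v τ + B *ᵥ v τ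
      rw [traj_congr (fun σ hσ => h σ (hσ.trans (Nat.lt_succ_self τ))), h τ (Nat.lt_succ_self τ)]

lemma traj_shift (x : Fin n → ℝ) (u : ℕ → Fin m → ℝ) :
    ∀ τ, traj A B (traj A B x u 1) (fun σ => u (σ+1)) τ = traj A B x u (τ+1)
  | 0 => rfl
  | τ+1 => by
      show A *ᵥ traj A B (traj A B x u 1) (fun σ => u (σ+1)) τ + B *ᵥ u (τ+1)
        = A *ᵥ traj A B x u (τ+1) + B *ᵥ u (τ+1)
      rw [traj_shift x u τ]

lemma cost_shift (Nq : ℕ) (x : Fin n → ℝ) (u : ℕ → Fin m → ℝ) :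
    cost A B P Q (Nq+1) x u
      = qf P x + qf Q (u 0) + cost A B P Q Nq (traj A B x u 1) (fun σ => u (σ+1)) := by
  rw [cost, cost, Finset.sum_range_succ']
  have ht : ∀ τ, traj A B (traj A B x u 1) (fun σ => u (σ+1)) τ = traj A B x u (τ+1) :=
    traj_shift x u
  rw [ht Nq]
  have hsum : ∀ τ ∈ Finset.range Nq,
      qf P (traj A B (traj A B x u 1) (fun σ => u (σ+1)) τ) + qf Q (u (τ+1))
        = qf P (traj A B x u (τ+1)) + qf Q (u (τ+1)) := by
    intro τ _; rw [ht τ]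
  rw [Finset.sum_congr rfl hsum]
  show _ = _ + _ + (_ + _)
  have h0 : traj A B x u 0 = x := rfl
  rw [h0]; ring

lemma feasible_shift {Nq : ℕ} {x : Fin n → ℝ} {u : ℕ → Fin m → ℝ}
    (h : Feasible A B X0 U (Nq+1) x u) :
    Feasible A B X0 U Nq (traj A B x u 1) (fun σ => u (σ+1)) := by
  refine ⟨fun τ hτ => h.1 (τ+1) (by omega), fun τ hτ => ?_⟩
  rw [traj_shift x u]
  exact h.2 (τ+1) (by omega)

lemma cost_nonneg (hP : P.PosDef) (hQ : Q.PosDef) (Nq : ℕ) (x : Fin n → ℝ)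
    (u : ℕ → Fin m → ℝ) : 0 ≤ cost A B P Q Nq x u := by
  rw [cost]
  have h1 : 0 ≤ ∑ τ ∈ Finset.range Nq, (qf P (traj A B x u τ) + qf Q (u τ)) :=
    Finset.sum_nonneg fun τ _ =>
      add_nonneg (qf_nonneg hP.posSemidef _) (qf_nonneg hQ.posSemidef _)
  have h2 := qf_nonneg hP.posSemidef (traj A B x u Nq)
  linarith

lemma qfP_le_cost (hP : P.PosDef) (hQ : Q.PosDef) (Nq : ℕ) (x : Fin n → ℝ)
    (u : ℕ → Fin m → ℝ) : qf P x ≤ cost A B P Q Nq x u := by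
  cases Nq with
  | zero =>
    rw [cost]
    simp [traj]
  | succ Nq =>
    rw [cost_shift]
    have h1 := qf_nonneg hQ.posSemidef (u 0)
    have h2 := cost_nonneg (A := A) (B := B) hP hQ Nq (traj A B x u 1) (fun σ => u (σ+1))
    linarith

lemma Vopt_le_cost (hP : P.PosDef) (hQ : Q.PosDef) {Nq : ℕ} {x : Fin n → ℝ}
    {u : ℕ → Fin m → ℝ} (h : Feasible A B X0 U Nq x u) :
    Vopt A B P Q X0 U Nq x ≤ cost A B P Q Nq x u :=
  csInf_le ⟨0, fun b ⟨w, _, hw⟩ => hw ▸ cost_nonneg hP hQ Nq x w⟩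
    (Set.mem_image_of_mem _ h)

lemma Vopt_nonneg (hP : P.PosDef) (hQ : Q.PosDef) {Nq : ℕ} {x : Fin n → ℝ}
    (hfe : ∃ u, Feasible A B X0 U Nq x u) : 0 ≤ Vopt A B P Q X0 U Nq x := by
  obtain ⟨u, hu⟩ := hfe
  exact le_csInf ⟨_, Set.mem_image_of_mem _ hu⟩ fun b ⟨w, _, hw⟩ => hw ▸ cost_nonneg hP hQ Nq x w

lemma qfP_le_Vopt (hP : P.PosDef) (hQ : Q.PosDef) {Nq : ℕ} {x : Fin n → ℝ}
    (hfe : ∃ u, Feasible A B X0 U Nq x u) : qf P x ≤ Vopt A B P Q X0 U Nq x := by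
  obtain ⟨u, hu⟩ := hfe
  exact le_csInf ⟨_, Set.mem_image_of_mem _ hu⟩ fun b ⟨w, _, hw⟩ => hw ▸ qfP_le_cost hP hQ Nq x w

lemma Vopt_zero (hP : P.PosDef) (hQ : Q.PosDef) (x : Fin n → ℝ) :
    Vopt A B P Q X0 U 0 x = qf P x := by
  have hconst : ∀ u : ℕ → Fin m → ℝ, cost A B P Q 0 x u = qf P x := by
    intro u; rw [cost]; simp [traj]
  have himg : cost A B P Q 0 x '' {u | Feasible A B X0 U 0 x u} = {qf P x} := by
    apply Set.eq_singleton_iff_unique_mem.mpr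
    constructor
    · exact ⟨fun _ => 0, ⟨fun τ hτ => absurd hτ (by omega), fun τ hτ => absurd hτ (by omega)⟩,
        hconst _⟩
    · rintro b ⟨w, _, hw⟩; rw [← hw, hconst]
  rw [Vopt, himg, csInf_singleton]

lemma Vopt_mono (hP : P.PosDef) (hQ : Q.PosDef) {Nq : ℕ} {x : Fin n → ℝ}
    (hfe : ∃ u, Feasible A B X0 U (Nq+1) x u) :
    Vopt A B P Q X0 U Nq x ≤ Vopt A B P Q X0 U (Nq+1) x := by
  obtain ⟨u0, hu0⟩ := hfe
  refine le_csInf ⟨_, Set.mem_image_of_mem _ hu0⟩ ?_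
  rintro b ⟨w, hw, rfl⟩
  have hwf : Feasible A B X0 U Nq x w := ⟨fun τ hτ => hw.1 τ (by omega),
    fun τ hτ => hw.2 τ (by omega)⟩
  have hle : cost A B P Q Nq x w ≤ cost A B P Q (Nq+1) x w := by
    rw [cost, cost, Finset.sum_range_succ]
    have h1 := qf_nonneg hP.posSemidef (traj A B x w (Nq+1))
    have h2 := qf_nonneg hQ.posSemidef (w Nq)
    have h3 : qf P (traj A B x w Nq) ≤ qf P (traj A B x w Nq) + qf Q (w Nq) := by linarith
    linarith
  exact (Vopt_le_cost hP hQ hwf).trans hle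

end Control

section Control2
variable {n m : ℕ} [NeZero n]
variable {A : Matrix (Fin n) (Fin n) ℝ} {B : Matrix (Fin n) (Fin m) ℝ}
  {K : Matrix (Fin m) (Fin n) ℝ} {Qb Pb P : Matrix (Fin n) (Fin n) ℝ}
  {Q : Matrix (Fin m) (Fin m) ℝ} {c : ℝ}
  {X0 X : Set (Fin n → ℝ)} {U : Set (Fin m → ℝ)}

/-- invariance of X0 under the feedback closed loop -/
lemma X0_invariant (hPb : Pb.PosDef) (hQb : Qb.PosDef)
    (hL : (A + B * K)ᵀ * Pb * (A + B * K) - Pb = -Qb)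
    (hX0 : X0 = {x : Fin n → ℝ | qf Pb x ≤ c}) {y : Fin n → ℝ} (hy : y ∈ X0) :
    (A + B * K) *ᵥ y ∈ X0 := by
  rw [hX0] at hy ⊢
  have h1 := qf_Abar (Qb := Qb) hPb hL y
  have h2 := qf_nonneg hQb.posSemidef y
  simp only [Set.mem_setOf_eq] at hy ⊢
  linarith

lemma qf_decay (hPb : Pb.PosDef) (hQb : Qb.PosDef)
    (hL : (A + B * K)ᵀ * Pb * (A + B * K) - Pb = -Qb) (y : Fin n → ℝ) :
    qf Pb ((A + B * K) *ᵥ y) ≤ lamParam Qb Pb * qf Pb y := by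
  have h1 := qf_Abar (Qb := Qb) hPb hL y
  have h2 := lamMin_le_qf hQb.1 y
  have h3 := qf_le_lamMax hPb.1 y
  have h4 : lamMin Qb / lamMax Pb * qf Pb y ≤ qf Qb y := by
    rw [div_mul_eq_mul_div, div_le_iff₀ (lamMax_pos hPb)]
    calc lamMin Qb * qf Pb y ≤ lamMin Qb * (lamMax Pb * (y ⬝ᵥ y)) := by
          exact mul_le_mul_of_nonneg_left h3 (lamMin_pos hQb).le
      _ = (lamMin Qb * (y ⬝ᵥ y)) * lamMax Pb := by ring
      _ ≤ qf Qb y * lamMax Pb := mul_le_mul_of_nonneg_right h2 (lamMax_pos hPb).le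
  rw [lamParam]
  have : qf Pb ((A + B * K) *ᵥ y) = qf Pb y - qf Qb y := h1
  rw [this]
  have expand : (1 - lamMin Qb / lamMax Pb) * qf Pb y
      = qf Pb y - lamMin Qb / lamMax Pb * qf Pb y := by ring
  rw [expand]
  linarith

lemma pow_mulVec_decay (hPb : Pb.PosDef) (hQb : Qb.PosDef)
    (hL : (A + B * K)ᵀ * Pb * (A + B * K) - Pb = -Qb)
    (hL0 : 0 ≤ lamParam Qb Pb) (y : Fin n → ℝ) :
    ∀ τ : ℕ, qf Pb ((A + B * K) ^ τ *ᵥ y) ≤ lamParam Qb Pb ^ τ * qf Pb y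
  | 0 => by simp [Matrix.one_mulVec]
  | τ+1 => by
      have hstep : (A + B * K) ^ (τ+1) *ᵥ y = (A + B * K) *ᵥ ((A + B * K) ^ τ *ᵥ y) := by
        rw [mulVec_mulVec, ← pow_succ']
      rw [hstep]
      calc qf Pb ((A + B * K) *ᵥ ((A + B * K) ^ τ *ᵥ y))
          ≤ lamParam Qb Pb * qf Pb ((A + B * K) ^ τ *ᵥ y) := qf_decay hPb hQb hL _
        _ ≤ lamParam Qb Pb * (lamParam Qb Pb ^ τ * qf Pb y) :=
            mul_le_mul_of_nonneg_left (pow_mulVec_decay hPb hQb hL hL0 y τ) hL0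
        _ = lamParam Qb Pb ^ (τ+1) * qf Pb y := by ring

lemma pow_mem_X0 (hPb : Pb.PosDef) (hQb : Qb.PosDef)
    (hL : (A + B * K)ᵀ * Pb * (A + B * K) - Pb = -Qb)
    (hX0 : X0 = {x : Fin n → ℝ | qf Pb x ≤ c}) {y : Fin n → ℝ} (hy : y ∈ X0) :
    ∀ τ : ℕ, (A + B * K) ^ τ *ᵥ y ∈ X0
  | 0 => by simpa [Matrix.one_mulVec] using hy
  | τ+1 => by
      have hstep : (A + B * K) ^ (τ+1) *ᵥ y = (A + B * K) *ᵥ ((A + B * K) ^ τ *ᵥ y) := by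
        rw [mulVec_mulVec, ← pow_succ']
      rw [hstep]
      exact X0_invariant hPb hQb hL hX0 (pow_mem_X0 hPb hQb hL hX0 hy τ)

lemma traj_fb (x : Fin n → ℝ) :
    ∀ τ, traj A B x (fun σ => K *ᵥ ((A + B * K) ^ σ *ᵥ x)) τ = (A + B * K) ^ τ *ᵥ x
  | 0 => by simp [traj, Matrix.one_mulVec]
  | τ+1 => by
      show A *ᵥ traj A B x _ τ + B *ᵥ (K *ᵥ ((A + B * K) ^ τ *ᵥ x)) = _
      rw [traj_fb x τ]
      rw [mulVec_mulVec, mulVec_mulVec, mulVec_mulVec, ← add_mulVec, ← add_mul, ← pow_succ']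

lemma fb_feasible (hPb : Pb.PosDef) (hQb : Qb.PosDef)
    (hL : (A + B * K)ᵀ * Pb * (A + B * K) - Pb = -Qb)
    (hX0 : X0 = {x : Fin n → ℝ | qf Pb x ≤ c}) (hX0X : X0 ⊆ X)
    (hKU : ∀ x ∈ X, K *ᵥ x ∈ U) {x : Fin n → ℝ} (hx : x ∈ X0) (Nq : ℕ) :
    Feasible A B X0 U Nq x (fun σ => K *ᵥ ((A + B * K) ^ σ *ᵥ x)) := by
  constructor
  · intro τ _
    exact hKU _ (hX0X (pow_mem_X0 hPb hQb hL hX0 hx τ))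
  · intro τ _
    rw [traj_fb]
    exact pow_mem_X0 hPb hQb hL hX0 hx _

lemma feasible_nonempty (hPb : Pb.PosDef) (hQb : Qb.PosDef)
    (hL : (A + B * K)ᵀ * Pb * (A + B * K) - Pb = -Qb)
    (hX0 : X0 = {x : Fin n → ℝ | qf Pb x ≤ c}) (hX0X : X0 ⊆ X)
    (hKU : ∀ x ∈ X, K *ᵥ x ∈ U) {x : Fin n → ℝ} (hx : x ∈ X0) (Nq : ℕ) :
    ∃ u, Feasible A B X0 U Nq x u :=
  ⟨_, fb_feasible hPb hQb hL hX0 hX0X hKU hx Nq⟩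

lemma fb_cost_le (hPb : Pb.PosDef) (hQb : Qb.PosDef)
    (hL : (A + B * K)ᵀ * Pb * (A + B * K) - Pb = -Qb)
    (hP : P.PosDef) (hQ : Q.PosDef) (x : Fin n → ℝ) (Nq : ℕ) :
    cost A B P Q Nq x (fun σ => K *ᵥ ((A + B * K) ^ σ *ᵥ x))
      ≤ phi Qb Pb P Q K Nq * (x ⬝ᵥ x) := by
  have hl0 : 0 ≤ lamParam Qb Pb := lam_nonneg hQb hPb hL
  have hl1 : lamParam Qb Pb < 1 := lam_lt_one hQb hPb
  set lam := lamParam Qb Pb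
  set R := P + Kᵀ * Q * K with hR
  set Cc := lamMax Pb * lamMax R / lamMin Pb with hCc
  have hRpd : R.PosDef := PKQK_posDef hP hQ
  -- pointwise bound
  have key : ∀ τ, qf R ((A + B * K) ^ τ *ᵥ x) ≤ Cc * lam ^ τ * (x ⬝ᵥ x) := by
    intro τ
    set z := (A + B * K) ^ τ *ᵥ x with hz
    have b1 : qf R z ≤ lamMax R * (z ⬝ᵥ z) := qf_le_lamMax hRpd.1 z
    have b2 : lamMin Pb * (z ⬝ᵥ z) ≤ qf Pb z := lamMin_le_qf hPb.1 z
    have b3 : qf Pb z ≤ lam ^ τ * qf Pb x := pow_mulVec_decay hPb hQb hL hl0 x τ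
    have b4 : qf Pb x ≤ lamMax Pb * (x ⬝ᵥ x) := qf_le_lamMax hPb.1 x
    have hPbmin := lamMin_pos hPb
    have hRmax := lamMax_pos hRpd
    have hlt : 0 ≤ lam ^ τ := pow_nonneg hl0 τ
    have hzz : (z ⬝ᵥ z) ≤ lam ^ τ * (lamMax Pb * (x ⬝ᵥ x)) / lamMin Pb := by
      rw [le_div_iff₀ hPbmin]
      calc (z ⬝ᵥ z) * lamMin Pb = lamMin Pb * (z ⬝ᵥ z) := by ring
        _ ≤ qf Pb z := b2
        _ ≤ lam ^ τ * qf Pb x := b3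
        _ ≤ lam ^ τ * (lamMax Pb * (x ⬝ᵥ x)) := mul_le_mul_of_nonneg_left b4 hlt
    calc qf R z ≤ lamMax R * (z ⬝ᵥ z) := b1
      _ ≤ lamMax R * (lam ^ τ * (lamMax Pb * (x ⬝ᵥ x)) / lamMin Pb) :=
          mul_le_mul_of_nonneg_left hzz hRmax.le
      _ = Cc * lam ^ τ * (x ⬝ᵥ x) := by rw [hCc]; ring
  -- stage cost identity
  have stage : ∀ τ, qf P ((A + B * K) ^ τ *ᵥ x)
      + qf Q (K *ᵥ ((A + B * K) ^ τ *ᵥ x)) = qf R ((A + B * K) ^ τ *ᵥ x) := by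
    intro τ
    rw [hR, qf_add, qf_transform]
  have hterm : qf P ((A + B * K) ^ Nq *ᵥ x) ≤ qf R ((A + B * K) ^ Nq *ᵥ x) := by
    rw [hR, qf_add]
    have := qf_nonneg (psd_transform hQ.posSemidef K) ((A + B * K) ^ Nq *ᵥ x)
    linarith
  have hcost : cost A B P Q Nq x (fun σ => K *ᵥ ((A + B * K) ^ σ *ᵥ x))
      ≤ ∑ τ ∈ Finset.range (Nq+1), Cc * lam ^ τ * (x ⬝ᵥ x) := by
    rw [cost, Finset.sum_range_succ]
    have h1 : ∀ τ ∈ Finset.range Nq,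
        qf P (traj A B x (fun σ => K *ᵥ ((A + B * K) ^ σ *ᵥ x)) τ)
          + qf Q (K *ᵥ ((A + B * K) ^ τ *ᵥ x)) ≤ Cc * lam ^ τ * (x ⬝ᵥ x) := by
      intro τ _
      rw [traj_fb, stage τ]
      exact key τ
    have h2 : qf P (traj A B x (fun σ => K *ᵥ ((A + B * K) ^ σ *ᵥ x)) Nq)
        ≤ Cc * lam ^ Nq * (x ⬝ᵥ x) := by
      rw [traj_fb]
      exact hterm.trans (key Nq)
    exact add_le_add (Finset.sum_le_sum h1) h2
  have hgeom : ∑ τ ∈ Finset.range (Nq+1), lam ^ τ = (1 - lam ^ (Nq+1)) / (1 - lam) := by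
    rw [geom_sum_eq (by linarith : lam ≠ 1)]
    rw [div_eq_div_iff (by linarith : lam - 1 ≠ 0) (by intro h; apply hl1.ne; linarith : (1:ℝ) - lam ≠ 0)]
    ring
  have heq : ∑ τ ∈ Finset.range (Nq+1), Cc * lam ^ τ * (x ⬝ᵥ x)
      = phi Qb Pb P Q K Nq * (x ⬝ᵥ x) := by
    have h1 : ∑ τ ∈ Finset.range (Nq+1), Cc * lam ^ τ * (x ⬝ᵥ x)
        = Cc * (∑ τ ∈ Finset.range (Nq+1), lam ^ τ) * (x ⬝ᵥ x) := by
      rw [Finset.mul_sum, Finset.sum_mul]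
    rw [h1, hgeom, phi, hCc, hR]
  exact hcost.trans (le_of_eq heq)

lemma Vopt_le_phi (hPb : Pb.PosDef) (hQb : Qb.PosDef)
    (hL : (A + B * K)ᵀ * Pb * (A + B * K) - Pb = -Qb)
    (hX0 : X0 = {x : Fin n → ℝ | qf Pb x ≤ c}) (hX0X : X0 ⊆ X)
    (hKU : ∀ x ∈ X, K *ᵥ x ∈ U)
    (hP : P.PosDef) (hQ : Q.PosDef) {x : Fin n → ℝ} (hx : x ∈ X0) (Nq : ℕ) :
    Vopt A B P Q X0 U Nq x ≤ phi Qb Pb P Q K Nq * (x ⬝ᵥ x) :=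
  (Vopt_le_cost hP hQ (fb_feasible hPb hQb hL hX0 hX0X hKU hx Nq)).trans
    (fb_cost_le hPb hQb hL hP hQ x Nq)

end Control2

section Control3
variable {n m : ℕ}
variable {A : Matrix (Fin n) (Fin n) ℝ} {B : Matrix (Fin n) (Fin m) ℝ}
  {P : Matrix (Fin n) (Fin n) ℝ} {Q : Matrix (Fin m) (Fin m) ℝ}
  {X0 : Set (Fin n → ℝ)} {U : Set (Fin m → ℝ)}

/-- Principle of optimality: the shifted tail of an optimal sequence is optimal for the
shorter problem at the successor state. -/
lemma shift_opt (hP : P.PosDef) (hQ : Q.PosDef) {Nq : ℕ} {x : Fin n → ℝ}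
    {u : ℕ → Fin m → ℝ} (hfe : Feasible A B X0 U (Nq+1) x u)
    (hopt : cost A B P Q (Nq+1) x u = Vopt A B P Q X0 U (Nq+1) x) :
    Feasible A B X0 U Nq (traj A B x u 1) (fun σ => u (σ+1)) ∧
    cost A B P Q Nq (traj A B x u 1) (fun σ => u (σ+1))
      = Vopt A B P Q X0 U Nq (traj A B x u 1) ∧
    Vopt A B P Q X0 U Nq (traj A B x u 1)
      = Vopt A B P Q X0 U (Nq+1) x - qf P x - qf Q (u 0) := by
  set x1 := traj A B x u 1 with hx1
  set u' : ℕ → Fin m → ℝ := fun σ => u (σ+1) with hu'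
  have hfe' : Feasible A B X0 U Nq x1 u' := feasible_shift hfe
  have hcs : cost A B P Q (Nq+1) x u = qf P x + qf Q (u 0) + cost A B P Q Nq x1 u' :=
    cost_shift Nq x u
  have hle : Vopt A B P Q X0 U Nq x1 ≤ cost A B P Q Nq x1 u' := Vopt_le_cost hP hQ hfe'
  have hge : cost A B P Q Nq x1 u' ≤ Vopt A B P Q X0 U Nq x1 := by
    refine le_csInf ⟨_, Set.mem_image_of_mem _ hfe'⟩ ?_
    rintro b ⟨w, hw, rfl⟩
    -- splice u 0 with w
    set v : ℕ → Fin m → ℝ := fun τ => if τ = 0 then u 0 else w (τ - 1) with hv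
    have htv : ∀ τ, traj A B x v (τ+1) = traj A B x1 w τ := by
      intro τ
      induction τ with
      | zero =>
        show A *ᵥ traj A B x v 0 + B *ᵥ v 0 = x1
        rw [hx1]
        show A *ᵥ x + B *ᵥ v 0 = A *ᵥ traj A B x u 0 + B *ᵥ u 0
        rfl
      | succ τ ih =>
        show A *ᵥ traj A B x v (τ+1) + B *ᵥ v (τ+1) = A *ᵥ traj A B x1 w τ + B *ᵥ w τ
        rw [ih]
        rfl
    have hvfe : Feasible A B X0 U (Nq+1) x v := by
      constructor
      · intro τ hτ
        match τ with
        | 0 => exact hfe.1 0 (by omega)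
        | τ+1 => exact hw.1 τ (by omega)
      · intro τ hτ
        rw [htv τ]
        match τ with
        | 0 => exact hfe.2 0 (by omega)
        | τ+1 => exact hw.2 τ (by omega)
    have hcv : cost A B P Q (Nq+1) x v = qf P x + qf Q (u 0) + cost A B P Q Nq x1 w := by
      have := cost_shift (A := A) (B := B) (P := P) (Q := Q) Nq x v
      have hvx1 : traj A B x v 1 = x1 := htv 0
      have hshiftv : (fun σ => v (σ+1)) = w := by
        funext σ
        show (if σ + 1 = 0 then u 0 else w (σ + 1 - 1)) = w σ
        simp
      rw [this, hvx1, hshiftv]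
      rfl
    have hVv : Vopt A B P Q X0 U (Nq+1) x ≤ cost A B P Q (Nq+1) x v := Vopt_le_cost hP hQ hvfe
    rw [← hopt, hcs] at hVv
    rw [hcv] at hVv
    linarith
  have heq : cost A B P Q Nq x1 u' = Vopt A B P Q X0 U Nq x1 := le_antisymm hge hle
  refine ⟨hfe', heq, ?_⟩
  rw [← heq, ← hopt, hcs]
  ring

end Control3

section Control4
variable {n m : ℕ} [NeZero n]
variable {A : Matrix (Fin n) (Fin n) ℝ} {B : Matrix (Fin n) (Fin m) ℝ}
  {K : Matrix (Fin m) (Fin n) ℝ} {Qb Pb P : Matrix (Fin n) (Fin n) ℝ}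
  {Q : Matrix (Fin m) (Fin m) ℝ} {c : ℝ}
  {X0 X : Set (Fin n → ℝ)} {U : Set (Fin m → ℝ)}
variable (hQb : Qb.PosDef) (hPb : Pb.PosDef)
  (hL : (A + B * K)ᵀ * Pb * (A + B * K) - Pb = -Qb)
  (hX0 : X0 = {x : Fin n → ℝ | qf Pb x ≤ c}) (hX0X : X0 ⊆ X)
  (hKU : ∀ x ∈ X, K *ᵥ x ∈ U)
  (hP : P.PosDef) (hQ : Q.PosDef)

include hQb hPb hL hX0 hX0X hKU hP hQ

/-- One-step decrease of the optimal value along the optimal trajectory. -/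
lemma step_contract {Nq : ℕ} {x : Fin n → ℝ} {u : ℕ → Fin m → ℝ} (hx : x ∈ X0)
    (hfe : Feasible A B X0 U (Nq+1) x u)
    (hopt : cost A B P Q (Nq+1) x u = Vopt A B P Q X0 U (Nq+1) x) :
    Vopt A B P Q X0 U Nq (traj A B x u 1)
      ≤ (1 - lamMin P / phi Qb Pb P Q K (Nq+1)) * Vopt A B P Q X0 U (Nq+1) x := by
  obtain ⟨hfe', heq, hdiff⟩ := shift_opt hP hQ hfe hopt
  have hub : Vopt A B P Q X0 U (Nq+1) x ≤ phi Qb Pb P Q K (Nq+1) * (x ⬝ᵥ x) :=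
    Vopt_le_phi hPb hQb hL hX0 hX0X hKU hP hQ hx (Nq+1)
  have hphi := phi_pos (K := K) (P := P) (Q := Q) hQb hPb hL hP hQ (Nq+1)
  have hq0 := qf_nonneg hQ.posSemidef (u 0)
  have hqp : lamMin P * (x ⬝ᵥ x) ≤ qf P x := lamMin_le_qf hP.1 x
  have hlamP := lamMin_pos hP
  have hkey : lamMin P / phi Qb Pb P Q K (Nq+1) * Vopt A B P Q X0 U (Nq+1) x ≤ qf P x := by
    rw [div_mul_eq_mul_div, div_le_iff₀ hphi]
    calc lamMin P * Vopt A B P Q X0 U (Nq+1) x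
        ≤ lamMin P * (phi Qb Pb P Q K (Nq+1) * (x ⬝ᵥ x)) :=
          mul_le_mul_of_nonneg_left hub hlamP.le
      _ = (lamMin P * (x ⬝ᵥ x)) * phi Qb Pb P Q K (Nq+1) := by ring
      _ ≤ qf P x * phi Qb Pb P Q K (Nq+1) := mul_le_mul_of_nonneg_right hqp hphi.le
  rw [hdiff]
  have expand : (1 - lamMin P / phi Qb Pb P Q K (Nq+1)) * Vopt A B P Q X0 U (Nq+1) x
      = Vopt A B P Q X0 U (Nq+1) x
        - lamMin P / phi Qb Pb P Q K (Nq+1) * Vopt A B P Q X0 U (Nq+1) x := by ring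
  rw [expand]
  linarith

/-- Terminal state cost bound along an optimal trajectory. -/
lemma term_bound : ∀ (Nq : ℕ) (x : Fin n → ℝ) (u : ℕ → Fin m → ℝ), x ∈ X0 →
    Feasible A B X0 U Nq x u → cost A B P Q Nq x u = Vopt A B P Q X0 U Nq x →
    qf P (traj A B x u Nq)
      ≤ (∏ κ ∈ Finset.range Nq, (1 - lamMin P / phi Qb Pb P Q K (κ+1)))
          * Vopt A B P Q X0 U Nq x := by
  intro Nq
  induction Nq with
  | zero =>
    intro x u _ _ _
    rw [Vopt_zero hP hQ, Finset.range_zero, Finset.prod_empty, one_mul]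
    exact le_of_eq rfl
  | succ Nq ih =>
    intro x u hx hfe hopt
    obtain ⟨hfe', heq, _⟩ := shift_opt hP hQ hfe hopt
    have hx1 : traj A B x u 1 ∈ X0 := hfe.2 0 (by omega)
    have ht : traj A B (traj A B x u 1) (fun σ => u (σ+1)) Nq = traj A B x u (Nq+1) :=
      traj_shift x u Nq
    have hih := ih (traj A B x u 1) (fun σ => u (σ+1)) hx1 hfe' heq
    rw [ht] at hih
    have hsc := step_contract hQb hPb hL hX0 hX0X hKU hP hQ hx hfe hopt
    have hrho := rho_nonneg (Abar := A + B * K) (K := K) hQb hPb hL hP hQ Nq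
    calc qf P (traj A B x u (Nq+1))
        ≤ (∏ κ ∈ Finset.range Nq, (1 - lamMin P / phi Qb Pb P Q K (κ+1)))
            * Vopt A B P Q X0 U Nq (traj A B x u 1) := hih
      _ ≤ (∏ κ ∈ Finset.range Nq, (1 - lamMin P / phi Qb Pb P Q K (κ+1)))
            * ((1 - lamMin P / phi Qb Pb P Q K (Nq+1)) * Vopt A B P Q X0 U (Nq+1) x) :=
          mul_le_mul_of_nonneg_left hsc hrho
      _ = (∏ κ ∈ Finset.range (Nq+1), (1 - lamMin P / phi Qb Pb P Q K (κ+1)))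
            * Vopt A B P Q X0 U (Nq+1) x := by
          rw [Finset.prod_range_succ]; ring

/-- Horizon extension: `V_{N+1}(x) ≤ (1+α_N) V_N(x)` at states where the `N`-QP is attained. -/
lemma extend_horizon {Nq : ℕ} {x : Fin n → ℝ} {u : ℕ → Fin m → ℝ} (hx : x ∈ X0)
    (hfe : Feasible A B X0 U Nq x u)
    (hopt : cost A B P Q Nq x u = Vopt A B P Q X0 U Nq x) :
    Vopt A B P Q X0 U (Nq+1) x
      ≤ (1 + alphaC Qb Pb P (A + B * K) Q K Nq) * Vopt A B P Q X0 U Nq x := by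
  set z := traj A B x u Nq with hz
  have hzX0 : z ∈ X0 := by
    cases Nq with
    | zero => exact hx
    | succ Nq => exact hfe.2 Nq (by omega)
  set v : ℕ → Fin m → ℝ := fun τ => if τ < Nq then u τ else K *ᵥ z with hv
  have htv : ∀ τ, τ ≤ Nq → traj A B x v τ = traj A B x u τ := by
    intro τ hτ
    exact traj_congr (fun σ hσ => by
      show (if σ < Nq then u σ else K *ᵥ z) = u σ
      rw [if_pos (by omega)])
  have htv1 : traj A B x v (Nq+1) = (A + B * K) *ᵥ z := by
    show A *ᵥ traj A B x v Nq + B *ᵥ v Nq = _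
    rw [htv Nq le_rfl, ← hz]
    show A *ᵥ z + B *ᵥ (if Nq < Nq then u Nq else K *ᵥ z) = _
    rw [if_neg (by omega), add_mulVec, mulVec_mulVec]
  have hvfe : Feasible A B X0 U (Nq+1) x v := by
    constructor
    · intro τ hτ
      by_cases hc : τ < Nq
      · show (if τ < Nq then u τ else K *ᵥ z) ∈ U
        rw [if_pos hc]; exact hfe.1 τ hc
      · show (if τ < Nq then u τ else K *ᵥ z) ∈ U
        rw [if_neg hc]
        exact hKU _ (hX0X hzX0)
    · intro τ hτ
      by_cases hc : τ + 1 ≤ Nq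
      · rw [htv (τ+1) hc]
        exact hfe.2 τ (by omega)
      · have : τ = Nq := by omega
        rw [this, htv1]
        exact X0_invariant hPb hQb hL hX0 hzX0
  have hcv : cost A B P Q (Nq+1) x v
      = cost A B P Q Nq x u + (qf Q (K *ᵥ z) + qf P ((A + B * K) *ᵥ z)) := by
    rw [cost, cost, Finset.sum_range_succ, htv1, htv Nq le_rfl, ← hz]
    have hs : ∀ τ ∈ Finset.range Nq,
        qf P (traj A B x v τ) + qf Q (v τ) = qf P (traj A B x u τ) + qf Q (u τ) := by
      intro τ hτ
      rw [Finset.mem_range] at hτ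
      rw [htv τ hτ.le]
      show _ + qf Q (if τ < Nq then u τ else K *ᵥ z) = _
      rw [if_pos hτ]
    rw [Finset.sum_congr rfl hs]
    show _ + (_ + qf Q (if Nq < Nq then u Nq else K *ᵥ z)) + _ = _
    rw [if_neg (by omega)]
    ring
  have hterm : qf Q (K *ᵥ z) + qf P ((A + B * K) *ᵥ z)
      ≤ alphaC Qb Pb P (A + B * K) Q K Nq * Vopt A B P Q X0 U Nq x := by
    have h1 : qf Q (K *ᵥ z) + qf P ((A + B * K) *ᵥ z)
        = qf (Kᵀ * Q * K + (A + B * K)ᵀ * P * (A + B * K)) z := by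
      rw [qf_add, qf_transform, qf_transform]
    set M := Kᵀ * Q * K + (A + B * K)ᵀ * P * (A + B * K) with hM
    have hMpsd : M.PosSemidef :=
      (psd_transform hQ.posSemidef K).add (psd_transform hP.posSemidef (A + B * K))
    have h2 : qf M z ≤ lamMax M * (z ⬝ᵥ z) := qf_le_lamMax hMpsd.1 z
    have h3 : lamMin P * (z ⬝ᵥ z) ≤ qf P z := lamMin_le_qf hP.1 z
    have hlamP := lamMin_pos hP
    have hlamM : 0 ≤ lamMax M := by
      obtain ⟨i, hi⟩ := exists_lamMax hMpsd.1
      rw [hi]; exact hMpsd.eigenvalues_nonneg i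
    have h4 : qf M z ≤ lamMax M / lamMin P * qf P z := by
      calc qf M z ≤ lamMax M * (z ⬝ᵥ z) := h2
        _ ≤ lamMax M * (qf P z / lamMin P) := by
            apply mul_le_mul_of_nonneg_left _ hlamM
            rw [le_div_iff₀ hlamP]
            linarith
        _ = lamMax M / lamMin P * qf P z := by ring
    have h5 := term_bound hQb hPb hL hX0 hX0X hKU hP hQ Nq x u hx hfe hopt
    rw [← hz] at h5
    have hpsi : psiC P (A + B * K) Q K = lamMax M / lamMin P := by rw [psiC, hM]
    have hpsi0 : 0 ≤ lamMax M / lamMin P := div_nonneg hlamM hlamP.le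
    calc qf Q (K *ᵥ z) + qf P ((A + B * K) *ᵥ z) = qf M z := h1
      _ ≤ lamMax M / lamMin P * qf P z := h4
      _ ≤ lamMax M / lamMin P
            * ((∏ κ ∈ Finset.range Nq, (1 - lamMin P / phi Qb Pb P Q K (κ+1)))
                * Vopt A B P Q X0 U Nq x) := mul_le_mul_of_nonneg_left h5 hpsi0
      _ = alphaC Qb Pb P (A + B * K) Q K Nq * Vopt A B P Q X0 U Nq x := by
          rw [alphaC, hpsi]; ring
  have hVv : Vopt A B P Q X0 U (Nq+1) x ≤ cost A B P Q (Nq+1) x v := Vopt_le_cost hP hQ hvfe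
  rw [hcv, hopt] at hVv
  calc Vopt A B P Q X0 U (Nq+1) x
      ≤ Vopt A B P Q X0 U Nq x + (qf Q (K *ᵥ z) + qf P ((A + B * K) *ᵥ z)) := hVv
    _ ≤ Vopt A B P Q X0 U Nq x + alphaC Qb Pb P (A + B * K) Q K Nq * Vopt A B P Q X0 U Nq x :=
        by linarith [hterm]
    _ = (1 + alphaC Qb Pb P (A + B * K) Q K Nq) * Vopt A B P Q X0 U Nq x := by ring

end Control4

section Iter
variable {n m : ℕ}
variable {A : Matrix (Fin n) (Fin n) ℝ} {B : Matrix (Fin n) (Fin m) ℝ}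
  {P : Matrix (Fin n) (Fin n) ℝ} {Q : Matrix (Fin m) (Fin m) ℝ}
  {X0 : Set (Fin n → ℝ)} {U : Set (Fin m → ℝ)}

lemma one_le_prod_real {s : Finset ℕ} {f : ℕ → ℝ} (h : ∀ i ∈ s, 1 ≤ f i) :
    1 ≤ ∏ i ∈ s, f i := by
  calc (1:ℝ) = ∏ _i ∈ s, (1:ℝ) := by rw [Finset.prod_const_one]
    _ ≤ ∏ i ∈ s, f i :=
        Finset.prod_le_prod (fun i _ => zero_le_one) h

lemma prod_nonneg_real {s : Finset ℕ} {f : ℕ → ℝ} (h : ∀ i ∈ s, 1 ≤ f i) :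
    0 ≤ ∏ i ∈ s, f i := zero_le_one.trans (one_le_prod_real h)

/-- Iterated principle of optimality. -/
lemma shift_opt_iter (hP : P.PosDef) (hQ : Q.PosDef) :
    ∀ (r : ℕ) {Nq : ℕ} {x : Fin n → ℝ} {u : ℕ → Fin m → ℝ},
      Feasible A B X0 U (Nq + r) x u → cost A B P Q (Nq + r) x u = Vopt A B P Q X0 U (Nq + r) x →
      Feasible A B X0 U Nq (traj A B x u r) (fun σ => u (σ + r)) ∧
        cost A B P Q Nq (traj A B x u r) (fun σ => u (σ + r))
          = Vopt A B P Q X0 U Nq (traj A B x u r)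
  | 0, Nq, x, u => fun hfe hopt => ⟨hfe, hopt⟩
  | r+1, Nq, x, u => fun hfe hopt => by
      have h1 := shift_opt (Nq := Nq + r) hP hQ hfe hopt
      have h2 := shift_opt_iter hP hQ r (Nq := Nq) h1.1 h1.2.1
      have ht : traj A B (traj A B x u 1) (fun σ => u (σ+1)) r = traj A B x u (r+1) :=
        traj_shift x u r
      rw [ht] at h2
      exact h2

end Iter

section Dim0
variable {m : ℕ}
variable {A : Matrix (Fin 0) (Fin 0) ℝ} {B : Matrix (Fin 0) (Fin m) ℝ}
  {Pb P : Matrix (Fin 0) (Fin 0) ℝ} {Q : Matrix (Fin m) (Fin m) ℝ} {c : ℝ}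
  {X0 : Set (Fin 0 → ℝ)} {U : Set (Fin m → ℝ)}

lemma qf_dim0 (R : Matrix (Fin 0) (Fin 0) ℝ) (y : Fin 0 → ℝ) : qf R y = 0 := by
  rw [qf, dotProduct]
  simp

lemma Vopt_dim0 (hP : P.PosDef) (hQ : Q.PosDef) (hc : 0 < c)
    (hX0 : X0 = {x : Fin 0 → ℝ | qf Pb x ≤ c}) (h0U : (0 : Fin m → ℝ) ∈ U)
    (Nq : ℕ) (y : Fin 0 → ℝ) : Vopt A B P Q X0 U Nq y = 0 := by
  have hfe : Feasible A B X0 U Nq y (fun _ => 0) := by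
    refine ⟨fun τ _ => h0U, fun τ _ => ?_⟩
    rw [hX0]
    show qf Pb _ ≤ c
    rw [qf_dim0]
    exact hc.le
  have hcost : cost A B P Q Nq y (fun _ => 0) = 0 := by
    rw [cost, qf_dim0]
    have : ∀ τ ∈ Finset.range Nq, qf P (traj A B y (fun _ => 0) τ) + qf Q 0 = 0 := by
      intro τ _
      rw [qf_dim0]
      have : qf Q (0 : Fin m → ℝ) = 0 := by rw [qf, zero_dotProduct]
      rw [this, add_zero]
    rw [Finset.sum_congr rfl this, Finset.sum_const_zero, add_zero]
  have h1 : Vopt A B P Q X0 U Nq y ≤ 0 := hcost ▸ Vopt_le_cost hP hQ hfe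
  have h2 : 0 ≤ Vopt A B P Q X0 U Nq y := Vopt_nonneg hP hQ ⟨_, hfe⟩
  linarith

end Dim0

section SStruct
variable {ϑ : ℕ → Bool} {s : ℕ → ℕ}
variable (hϑ0 : ϑ 0 = false) (hs0 : s 0 = 0)
  (hsrec : ∀ k, s (k + 1) = if ϑ (k + 1) = true then s k + 1 else 0)
include hϑ0 hs0 hsrec

lemma s_le_self : ∀ k, s k ≤ k := by
  intro k
  induction k with
  | zero => exact le_of_eq hs0
  | succ k ih =>
    rw [hsrec k]
    split
    · omega
    · omega

lemma theta_of_s_zero : ∀ k, s k = 0 → ϑ k = false := by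
  intro k h
  cases k with
  | zero => exact hϑ0
  | succ k =>
    by_contra hb
    have hT : ϑ (k+1) = true := by
      cases hϑ : ϑ (k+1)
      · exact absurd hϑ hb
      · rfl
    rw [hsrec k, if_pos hT] at h
    omega

lemma s_run : ∀ k, ∀ r ≤ s k, s (k - r) = s k - r := by
  intro k r
  induction r with
  | zero => simp
  | succ r ih =>
    intro hr
    have hr' : r ≤ s k := by omega
    have hkr := ih hr'
    have hpos : 1 ≤ s (k - r) := by omega
    have hk1 : 1 ≤ k - r := by
      by_contra hb
      have h0 : k - r = 0 := by omega
      rw [h0, hs0] at hkr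
      omega
    obtain ⟨t, ht⟩ : ∃ t, k - r = t + 1 := ⟨k - r - 1, by omega⟩
    have hϑt : ϑ (t+1) = true := by
      by_contra hb
      have hF : ϑ (t+1) = false := by
        cases hϑ : ϑ (t+1)
        · rfl
        · exact absurd hϑ hb
      have := hsrec t
      rw [if_neg (by rw [hF]; exact Bool.false_ne_true), ← ht] at this
      omega
    have hst : s (t+1) = s t + 1 := by rw [hsrec t, if_pos hϑt]
    have hts : t = k - (r+1) := by omega
    rw [← hts]
    rw [ht, hst] at hkr
    omega

end SStruct

set_option maxHeartbeats 2000000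

/-- Per-step contraction of AR-RHC under replay attacks, inequality (15):
along any closed-loop trajectory of the AR-RHC with horizon `N ≥ S + 1` under a replay
attack signal with at most `S` consecutive attacks (each encountered `N′`-QP,
`N − S ≤ N′ ≤ N`, attaining its infimum), for all `k ≥ 0` (with `s(−1) := 0`):
`V_{N−s(k)}(x(k+1)) ≤ γ_{N,S}·V_{N−s(k−1)}(x(k))`. -/
theorem stmt13 {n m : ℕ}
    (A : Matrix (Fin n) (Fin n) ℝ) (B : Matrix (Fin n) (Fin m) ℝ)
    (K : Matrix (Fin m) (Fin n) ℝ) (Qb Pb : Matrix (Fin n) (Fin n) ℝ)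
    (hQb : Qb.PosDef) (hPb : Pb.PosDef)
    (hLyap : (A + B * K)ᵀ * Pb * (A + B * K) - Pb = -Qb)
    (c : ℝ) (hc : 0 < c)
    (X0 : Set (Fin n → ℝ)) (hX0 : X0 = {x : Fin n → ℝ | qf Pb x ≤ c})
    (X : Set (Fin n → ℝ)) (U : Set (Fin m → ℝ))
    (hX : Convex ℝ X) (hU : Convex ℝ U)
    (h0X : (0 : Fin n → ℝ) ∈ X) (h0U : (0 : Fin m → ℝ) ∈ U)
    (hX0X : X0 ⊆ X) (hKU : ∀ x ∈ X, K *ᵥ x ∈ U)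
    (P : Matrix (Fin n) (Fin n) ℝ) (Q : Matrix (Fin m) (Fin m) ℝ)
    (hP : P.PosDef) (hQ : Q.PosDef)
    (S N : ℕ) (hSN : S + 1 ≤ N)
    (ϑ : ℕ → Bool) (hϑ0 : ϑ 0 = false)
    (s : ℕ → ℕ) (hs0 : s 0 = 0)
    (hsrec : ∀ k, s (k + 1) = if ϑ (k + 1) = true then s k + 1 else 0)
    (hsS : ∀ k, s k ≤ S)
    (x : ℕ → Fin n → ℝ) (hxX0 : ∀ k, x k ∈ X0)
    (uplan : ℕ → ℕ → Fin m → ℝ)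
    (hplan : ∀ k, ϑ k = false →
      Feasible A B X0 U N (x k) (uplan k) ∧
        cost A B P Q N (x k) (uplan k) = Vopt A B P Q X0 U N (x k))
    (hdyn : ∀ k, x (k + 1) = A *ᵥ x k + B *ᵥ uplan (k - s k) (s k))
    (hattain : ∀ k, ∀ N' : ℕ, N - S ≤ N' → N' ≤ N →
      ∃ w : ℕ → Fin m → ℝ, Feasible A B X0 U N' (x k) w ∧
        cost A B P Q N' (x k) w = Vopt A B P Q X0 U N' (x k))
    :
    ∀ k : ℕ, Vopt A B P Q X0 U (N - s k) (x (k + 1))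
      ≤ gammaNS Qb Pb P (A + B * K) Q K N S * Vopt A B P Q X0 U (N - s (k - 1)) (x k) := by

  intro k
  -- dimension zero case
  rcases Nat.eq_zero_or_pos n with hn | hn
  · subst hn
    rw [Vopt_dim0 hP hQ hc hX0 h0U, Vopt_dim0 hP hQ hc hX0 h0U, mul_zero]
  have : NeZero n := ⟨by omega⟩
  have hL : (A + B * K)ᵀ * Pb * (A + B * K) - Pb = -Qb := hLyap
  obtain ⟨j, hj⟩ : ∃ j, s k = j := ⟨s k, rfl⟩
  have hjS : j ≤ S := hj ▸ hsS k
  have hjk : j ≤ k := hj ▸ s_le_self hϑ0 hs0 hsrec k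
  have hjN : j + 1 ≤ N := by omega
  -- the last unattacked instant
  have hsk0 : s (k - j) = 0 := by
    have := s_run hϑ0 hs0 hsrec k j (le_of_eq hj.symm)
    omega
  have hϑk0 : ϑ (k - j) = false := theta_of_s_zero hϑ0 hs0 hsrec _ hsk0
  obtain ⟨hw0fe, hw0opt⟩ := hplan (k - j) hϑk0
  -- trajectory along the attacked run
  have htraj : ∀ r ≤ j, x (k - j + r) = traj A B (x (k - j)) (uplan (k - j)) r := by
    intro r hr
    induction r with
    | zero => rfl
    | succ r ih =>
      have hr' : r ≤ j := by omega
      have hsr : s (k - j + r) = r := by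
        have h1 := s_run hϑ0 hs0 hsrec k (j - r) (by omega)
        have h2 : k - (j - r) = k - j + r := by omega
        rw [h2] at h1
        omega
      have hd := hdyn (k - j + r)
      rw [hsr, show k - j + r - r = k - j from by omega] at hd
      show x (k - j + r + 1) = traj A B (x (k - j)) (uplan (k - j)) (r + 1)
      rw [hd, ih hr']
      rfl
  have hxk : x k = traj A B (x (k - j)) (uplan (k - j)) j := by
    have h := htraj j le_rfl
    rwa [show k - j + j = k from by omega] at h
  -- tail optimality at x k for horizon N - j
  have hfeN : Feasible A B X0 U ((N - j) + j) (x (k - j)) (uplan (k - j)) := by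
    rw [show (N - j) + j = N from by omega]; exact hw0fe
  have hoptN : cost A B P Q ((N - j) + j) (x (k - j)) (uplan (k - j))
      = Vopt A B P Q X0 U ((N - j) + j) (x (k - j)) := by
    rw [show (N - j) + j = N from by omega]; exact hw0opt
  obtain ⟨htfe, htopt⟩ := shift_opt_iter hP hQ j hfeN hoptN
  rw [← hxk] at htfe htopt
  have hNj : N - j = (N - j - 1) + 1 := by omega
  have htfe' : Feasible A B X0 U ((N - j - 1) + 1) (x k) (fun σ => uplan (k - j) (σ + j)) := by
    rw [← hNj]; exact htfe
  have htopt' : cost A B P Q ((N - j - 1) + 1) (x k) (fun σ => uplan (k - j) (σ + j))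
      = Vopt A B P Q X0 U ((N - j - 1) + 1) (x k) := by
    rw [← hNj]; exact htopt
  -- identify the successor state
  have hxk1 : traj A B (x k) (fun σ => uplan (k - j) (σ + j)) 1 = x (k + 1) := by
    have hd := hdyn k
    rw [hj] at hd
    show A *ᵥ traj A B (x k) _ 0 + B *ᵥ uplan (k - j) (0 + j) = x (k + 1)
    rw [Nat.zero_add, hd]
    rfl
  -- one-step contraction
  have hstep := step_contract hQb hPb hL hX0 hX0X hKU hP hQ (hxX0 k) htfe' htopt'
  rw [hxk1] at hstep
  -- tail of tail optimal at x (k+1)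
  obtain ⟨hsfe, hsopt, _⟩ := shift_opt hP hQ htfe' htopt'
  rw [hxk1] at hsfe hsopt
  have hext := extend_horizon hQb hPb hL hX0 hX0X hKU hP hQ (hxX0 (k+1)) hsfe hsopt
  -- nonnegativity and factor facts
  have hVk : 0 ≤ Vopt A B P Q X0 U ((N - j - 1) + 1) (x k) :=
    Vopt_nonneg hP hQ (feasible_nonempty hPb hQb hL hX0 hX0X hKU (hxX0 k) _)
  have hVk1 : 0 ≤ Vopt A B P Q X0 U (N - j - 1) (x (k+1)) :=
    Vopt_nonneg hP hQ (feasible_nonempty hPb hQb hL hX0 hX0X hKU (hxX0 (k+1)) _)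
  have hchi0 : 0 ≤ 1 - lamMin P / phiInf Qb Pb P Q K := chi_nonneg hQb hPb hL hP hQ
  have hfacchi : 1 - lamMin P / phi Qb Pb P Q K ((N - j - 1) + 1)
      ≤ 1 - lamMin P / phiInf Qb Pb P Q K := factor_le_chi hQb hPb hL hP hQ _
  have halpha0 : 0 ≤ alphaC Qb Pb P (A + B * K) Q K (N - j - 1) :=
    alpha_nonneg hQb hPb hL hP hQ _
  -- master bound: V_{N-j}(x(k+1)) ≤ (1+α_{N-j-1}) χ V_{N-j}(x k)
  have hmaster : Vopt A B P Q X0 U ((N - j - 1) + 1) (x (k+1))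
      ≤ (1 + alphaC Qb Pb P (A + B * K) Q K (N - j - 1))
          * ((1 - lamMin P / phiInf Qb Pb P Q K)
            * Vopt A B P Q X0 U ((N - j - 1) + 1) (x k)) := by
    have h1 : Vopt A B P Q X0 U (N - j - 1) (x (k+1))
        ≤ (1 - lamMin P / phiInf Qb Pb P Q K)
            * Vopt A B P Q X0 U ((N - j - 1) + 1) (x k) := by
      refine hstep.trans ?_
      exact mul_le_mul_of_nonneg_right hfacchi hVk
    refine hext.trans ?_
    exact mul_le_mul_of_nonneg_left h1 (by linarith)
  -- rewrite the goal's LHS horizon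
  rw [hj, hNj]
  rw [gammaNS]
  by_cases hϑk : ϑ k = true
  · -- attacked step: j = s(k-1) + 1
    obtain ⟨k', rfl⟩ : ∃ k', k = k' + 1 := by
      refine ⟨k - 1, ?_⟩
      rcases Nat.eq_zero_or_pos k with h0 | h0
      · rw [h0] at hϑk; rw [hϑ0] at hϑk; exact absurd hϑk (by simp)
      · omega
    have hik : s (k' + 1 - 1) = j - 1 := by
      have := hsrec k'
      rw [if_pos hϑk] at this
      rw [hj] at this
      show s k' = j - 1
      omega
    have hj1 : 1 ≤ j := by
      have := hsrec k'
      rw [if_pos hϑk] at this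
      omega
    rw [hik]
    -- V_{N-j}(x k) ≤ V_{N-(j-1)}(x k)
    have hmono : Vopt A B P Q X0 U ((N - j - 1) + 1) (x (k' + 1))
        ≤ Vopt A B P Q X0 U (N - (j - 1)) (x (k' + 1)) := by
      have h := Vopt_mono (A := A) (B := B) (X0 := X0) (U := U) hP hQ
        (feasible_nonempty hPb hQb hL hX0 hX0X hKU (hxX0 (k' + 1)) ((N - j - 1) + 1 + 1))
      rw [show (N - j - 1) + 1 + 1 = N - (j - 1) from by omega] at h
      exact h
    have hα : alphaC Qb Pb P (A + B * K) Q K (N - j - 1)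
        ≤ alphaC Qb Pb P (A + B * K) Q K (N - S - 1) :=
      alpha_antitone hQb hPb hL hP hQ (by omega)
    have hmax : (1 + alphaC Qb Pb P (A + B * K) Q K (N - S - 1))
        ≤ max (1 + alphaC Qb Pb P (A + B * K) Q K (N - S - 1))
            ((1 + alphaC Qb Pb P (A + B * K) Q K (N - 1)) *
              ∏ ℓ ∈ Finset.Ico (N - S) N, (1 + alphaC Qb Pb P (A + B * K) Q K ℓ)) :=
      le_max_left _ _
    have hVki : 0 ≤ Vopt A B P Q X0 U (N - (j - 1)) (x (k' + 1)) :=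
      Vopt_nonneg hP hQ (feasible_nonempty hPb hQb hL hX0 hX0X hKU (hxX0 (k' + 1)) _)
    calc Vopt A B P Q X0 U ((N - j - 1) + 1) (x (k' + 1 + 1))
        ≤ (1 + alphaC Qb Pb P (A + B * K) Q K (N - j - 1))
            * ((1 - lamMin P / phiInf Qb Pb P Q K)
              * Vopt A B P Q X0 U ((N - j - 1) + 1) (x (k' + 1))) := hmaster
      _ ≤ (1 + alphaC Qb Pb P (A + B * K) Q K (N - S - 1))
            * ((1 - lamMin P / phiInf Qb Pb P Q K)
              * Vopt A B P Q X0 U (N - (j - 1)) (x (k' + 1))) := by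
          have hinner : (1 - lamMin P / phiInf Qb Pb P Q K)
              * Vopt A B P Q X0 U ((N - j - 1) + 1) (x (k' + 1))
              ≤ (1 - lamMin P / phiInf Qb Pb P Q K)
                * Vopt A B P Q X0 U (N - (j - 1)) (x (k' + 1)) :=
            mul_le_mul_of_nonneg_left hmono hchi0
          have houter : 0 ≤ (1 - lamMin P / phiInf Qb Pb P Q K)
              * Vopt A B P Q X0 U (N - (j - 1)) (x (k' + 1)) :=
            mul_nonneg hchi0 hVki
          nlinarith [mul_le_mul_of_nonneg_left hinner (by linarith :
            (0:ℝ) ≤ 1 + alphaC Qb Pb P (A + B * K) Q K (N - j - 1))]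
      _ ≤ (max (1 + alphaC Qb Pb P (A + B * K) Q K (N - S - 1))
            ((1 + alphaC Qb Pb P (A + B * K) Q K (N - 1)) *
              ∏ ℓ ∈ Finset.Ico (N - S) N, (1 + alphaC Qb Pb P (A + B * K) Q K ℓ)))
            * ((1 - lamMin P / phiInf Qb Pb P Q K)
              * Vopt A B P Q X0 U (N - (j - 1)) (x (k' + 1))) :=
          mul_le_mul_of_nonneg_right hmax (mul_nonneg hchi0 hVki)
      _ = (1 - lamMin P / phiInf Qb Pb P Q K) *
            (max (1 + alphaC Qb Pb P (A + B * K) Q K (N - S - 1))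
            ((1 + alphaC Qb Pb P (A + B * K) Q K (N - 1)) *
              ∏ ℓ ∈ Finset.Ico (N - S) N, (1 + alphaC Qb Pb P (A + B * K) Q K ℓ)))
            * Vopt A B P Q X0 U (N - (j - 1)) (x (k' + 1)) := by ring
  · -- unattacked step: j = 0
    have hj0 : j = 0 := by
      cases k with
      | zero => rw [← hj, hs0]
      | succ k' =>
        have := hsrec k'
        rw [if_neg hϑk] at this
        omega
    subst hj0
    rw [Nat.sub_zero] at hmaster hstep hext hVk hVk1 hfacchi halpha0 ⊢
    -- extension chain at x k with i := s (k-1)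
    obtain ⟨i, hi⟩ : ∃ i, s (k - 1) = i := ⟨_, rfl⟩
    have hiS : i ≤ S := hi ▸ hsS (k - 1)
    rw [hi]
    have hchain : ∀ d : ℕ, d ≤ i →
        Vopt A B P Q X0 U (N - i + d) (x k)
          ≤ (∏ ℓ ∈ Finset.Ico (N - i) (N - i + d),
              (1 + alphaC Qb Pb P (A + B * K) Q K ℓ)) * Vopt A B P Q X0 U (N - i) (x k) := by
      intro d
      induction d with
      | zero =>
        intro _
        rw [Nat.add_zero, Finset.Ico_self, Finset.prod_empty, one_mul]
      | succ d ih =>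
        intro hd
        have hd' : d ≤ i := by omega
        obtain ⟨w, hwfe, hwopt⟩ := hattain k (N - i + d) (by omega) (by omega)
        have hextd := extend_horizon hQb hPb hL hX0 hX0X hKU hP hQ (hxX0 k) hwfe hwopt
        have hProd0 : (0:ℝ) ≤ ∏ ℓ ∈ Finset.Ico (N - i) (N - i + d),
            (1 + alphaC Qb Pb P (A + B * K) Q K ℓ) :=
          prod_nonneg_real fun ℓ _ => by
            have := alpha_nonneg (K := K) (Q := Q) hQb hPb hL hP hQ ℓ
            linarith
        have h1a : 0 ≤ 1 + alphaC Qb Pb P (A + B * K) Q K (N - i + d) := by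
          have := alpha_nonneg (K := K) (Q := Q) hQb hPb hL hP hQ (N - i + d)
          linarith
        calc Vopt A B P Q X0 U (N - i + (d+1)) (x k)
            = Vopt A B P Q X0 U ((N - i + d) + 1) (x k) := by
              rw [show N - i + (d+1) = (N - i + d) + 1 from by omega]
          _ ≤ (1 + alphaC Qb Pb P (A + B * K) Q K (N - i + d))
                * Vopt A B P Q X0 U (N - i + d) (x k) := hextd
          _ ≤ (1 + alphaC Qb Pb P (A + B * K) Q K (N - i + d))
                * ((∏ ℓ ∈ Finset.Ico (N - i) (N - i + d),
                    (1 + alphaC Qb Pb P (A + B * K) Q K ℓ))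
                  * Vopt A B P Q X0 U (N - i) (x k)) :=
              mul_le_mul_of_nonneg_left (ih hd') h1a
          _ = (∏ ℓ ∈ Finset.Ico (N - i) (N - i + (d+1)),
                (1 + alphaC Qb Pb P (A + B * K) Q K ℓ)) * Vopt A B P Q X0 U (N - i) (x k) := by
              rw [show N - i + (d+1) = (N - i + d) + 1 from by omega,
                Finset.prod_Ico_succ_top (by omega : N - i ≤ N - i + d)]
              ring
    have hchainN := hchain i le_rfl
    rw [show N - i + i = N from by omega] at hchainN
    -- product comparison
    have hsplit : (∏ ℓ ∈ Finset.Ico (N - S) (N - i), (1 + alphaC Qb Pb P (A + B * K) Q K ℓ))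
        * (∏ ℓ ∈ Finset.Ico (N - i) N, (1 + alphaC Qb Pb P (A + B * K) Q K ℓ))
        = ∏ ℓ ∈ Finset.Ico (N - S) N, (1 + alphaC Qb Pb P (A + B * K) Q K ℓ) :=
      Finset.prod_Ico_consecutive _ (by omega) (by omega)
    have hone : (1:ℝ) ≤ ∏ ℓ ∈ Finset.Ico (N - S) (N - i),
        (1 + alphaC Qb Pb P (A + B * K) Q K ℓ) :=
      one_le_prod_real fun ℓ _ => by
        have := alpha_nonneg (K := K) (Q := Q) hQb hPb hL hP hQ ℓ
        linarith
    have hpos2 : (0:ℝ) ≤ ∏ ℓ ∈ Finset.Ico (N - i) N, (1 + alphaC Qb Pb P (A + B * K) Q K ℓ) :=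
      prod_nonneg_real fun ℓ _ => by
        have := alpha_nonneg (K := K) (Q := Q) hQb hPb hL hP hQ ℓ
        linarith
    have hprodle : (∏ ℓ ∈ Finset.Ico (N - i) N, (1 + alphaC Qb Pb P (A + B * K) Q K ℓ))
        ≤ ∏ ℓ ∈ Finset.Ico (N - S) N, (1 + alphaC Qb Pb P (A + B * K) Q K ℓ) := by
      rw [← hsplit]
      nlinarith
    have hVi : 0 ≤ Vopt A B P Q X0 U (N - i) (x k) :=
      Vopt_nonneg hP hQ (feasible_nonempty hPb hQb hL hX0 hX0X hKU (hxX0 k) _)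
    have h1aN : (0:ℝ) ≤ 1 + alphaC Qb Pb P (A + B * K) Q K (N - 1) := by
      have := alpha_nonneg (K := K) (Q := Q) hQb hPb hL hP hQ (N - 1)
      linarith
    have hVN : Vopt A B P Q X0 U ((N - 1) + 1) (x k)
        ≤ (∏ ℓ ∈ Finset.Ico (N - S) N, (1 + alphaC Qb Pb P (A + B * K) Q K ℓ))
            * Vopt A B P Q X0 U (N - i) (x k) := by
      rw [show (N - 1) + 1 = N from by omega]
      refine hchainN.trans ?_
      exact mul_le_mul_of_nonneg_right hprodle hVi
    have hmax2 : (1 + alphaC Qb Pb P (A + B * K) Q K (N - 1)) *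
          (∏ ℓ ∈ Finset.Ico (N - S) N, (1 + alphaC Qb Pb P (A + B * K) Q K ℓ))
        ≤ max (1 + alphaC Qb Pb P (A + B * K) Q K (N - S - 1))
            ((1 + alphaC Qb Pb P (A + B * K) Q K (N - 1)) *
              ∏ ℓ ∈ Finset.Ico (N - S) N, (1 + alphaC Qb Pb P (A + B * K) Q K ℓ)) :=
      le_max_right _ _
    calc Vopt A B P Q X0 U ((N - 1) + 1) (x (k + 1))
        ≤ (1 + alphaC Qb Pb P (A + B * K) Q K (N - 1))
            * ((1 - lamMin P / phiInf Qb Pb P Q K)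
              * Vopt A B P Q X0 U ((N - 1) + 1) (x k)) := hmaster
      _ ≤ (1 + alphaC Qb Pb P (A + B * K) Q K (N - 1))
            * ((1 - lamMin P / phiInf Qb Pb P Q K)
              * ((∏ ℓ ∈ Finset.Ico (N - S) N, (1 + alphaC Qb Pb P (A + B * K) Q K ℓ))
                * Vopt A B P Q X0 U (N - i) (x k))) := by
          refine mul_le_mul_of_nonneg_left ?_ h1aN
          exact mul_le_mul_of_nonneg_left hVN hchi0
      _ = ((1 + alphaC Qb Pb P (A + B * K) Q K (N - 1)) *
              (∏ ℓ ∈ Finset.Ico (N - S) N, (1 + alphaC Qb Pb P (A + B * K) Q K ℓ)))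
            * ((1 - lamMin P / phiInf Qb Pb P Q K) * Vopt A B P Q X0 U (N - i) (x k)) := by
          ring
      _ ≤ (max (1 + alphaC Qb Pb P (A + B * K) Q K (N - S - 1))
            ((1 + alphaC Qb Pb P (A + B * K) Q K (N - 1)) *
              ∏ ℓ ∈ Finset.Ico (N - S) N, (1 + alphaC Qb Pb P (A + B * K) Q K ℓ)))
            * ((1 - lamMin P / phiInf Qb Pb P Q K) * Vopt A B P Q X0 U (N - i) (x k)) :=
          mul_le_mul_of_nonneg_right hmax2 (mul_nonneg hchi0 hVi)
      _ = (1 - lamMin P / phiInf Qb Pb P Q K) *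
            (max (1 + alphaC Qb Pb P (A + B * K) Q K (N - S - 1))
            ((1 + alphaC Qb Pb P (A + B * K) Q K (N - 1)) *
              ∏ ℓ ∈ Finset.Ico (N - S) N, (1 + alphaC Qb Pb P (A + B * K) Q K ℓ)))
            * Vopt A B P Q X0 U (N - i) (x k) := by ring
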